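/- arXiv:2010.04130 — 2 statements merged into one kernel-verified Lean document; each statement's English description precedes it below -/
import Mathlib

section
/- Let T be a hyponormal absolutely norm attaining operator on an infinite-dimensional complex Hilbert space H, let {λ} = σ_ess(|T|) with λ > 0, and let H_1 = N(|T| − λI). Then T is normal if and only if T maps H_1 onto H_1 (equivalently, the isometry S_1 in the structure representation of T is unitary). -/
noncomputable section

variable {H : Type*} [NormedAddCommGroup H] [InnerProductSpace ℂ H] [CompleteSpace H]

/-- The restriction of `T` to the subspace `M` attains its norm:
there is a unit vector `x ∈ M` with `‖T x‖ = sup {‖T y‖ : y ∈ M, ‖y‖ = 1}`. -/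
def NormAttainingOn (T : H →L[ℂ] H) (M : Submodule ℂ H) : Prop :=
  ∃ x ∈ M, ‖x‖ = 1 ∧ ‖T x‖ = sSup {r : ℝ | ∃ y ∈ M, ‖y‖ = 1 ∧ r = ‖T y‖}

/-- `T` is absolutely norm attaining (an `𝒜𝒩`-operator): its restriction to every
nonzero closed subspace attains its norm. -/
def IsANOperator (T : H →L[ℂ] H) : Prop :=
  ∀ M : Submodule ℂ H, IsClosed (M : Set H) → M ≠ ⊥ → NormAttainingOn T M

/-- The restriction of `T` to the subspace `M` attains its minimum modulus. -/
def MinAttainingOn (T : H →L[ℂ] H) (M : Submodule ℂ H) : Prop :=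
  ∃ x ∈ M, ‖x‖ = 1 ∧ ‖T x‖ = sInf {r : ℝ | ∃ y ∈ M, ‖y‖ = 1 ∧ r = ‖T y‖}

/-- `T` is absolutely minimum attaining (an `𝒜ℳ`-operator). -/
def IsAMOperator (T : H →L[ℂ] H) : Prop :=
  ∀ M : Submodule ℂ H, IsClosed (M : Set H) → M ≠ ⊥ → MinAttainingOn T M

/-- A Fredholm operator: closed range and finite dimensional kernel and co-kernel
(kernel of the adjoint). -/
def IsFredholmOp (T : H →L[ℂ] H) : Prop :=
  IsClosed (LinearMap.range (T : H →ₗ[ℂ] H) : Set H) ∧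
    FiniteDimensional ℂ (LinearMap.ker (T : H →ₗ[ℂ] H)) ∧
    FiniteDimensional ℂ (LinearMap.ker (ContinuousLinearMap.adjoint T : H →ₗ[ℂ] H))

/-- The essential spectrum: the set of `z` such that `T - z I` is not Fredholm. -/
def essSpectrum (T : H →L[ℂ] H) : Set ℂ :=
  {z : ℂ | ¬ IsFredholmOp (T - z • (1 : H →L[ℂ] H))}

/-- The Fredholm index `dim N(T) - dim N(T*)`. -/
def fredholmIndex (T : H →L[ℂ] H) : ℤ :=
  (Module.finrank ℂ (LinearMap.ker (T : H →ₗ[ℂ] H)) : ℤ) -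
    (Module.finrank ℂ (LinearMap.ker (ContinuousLinearMap.adjoint T : H →ₗ[ℂ] H)) : ℤ)

/-- The Weyl spectrum: the set of `z` such that `T - z I` is not Fredholm of index `0`. -/
def weylSpectrum (T : H →L[ℂ] H) : Set ℂ :=
  {z : ℂ | ¬ (IsFredholmOp (T - z • (1 : H →L[ℂ] H)) ∧
      fredholmIndex (T - z • (1 : H →L[ℂ] H)) = 0)}

/-- `T` is hyponormal: `T*T - TT* ≥ 0`. -/
def Hyponormal (T : H →L[ℂ] H) : Prop :=
  (ContinuousLinearMap.adjoint T * T - T * ContinuousLinearMap.adjoint T).IsPositive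

/-- `T` is paranormal: `‖T x‖² ≤ ‖T² x‖ ‖x‖` for all `x`. -/
def Paranormal (T : H →L[ℂ] H) : Prop :=
  ∀ x : H, ‖T x‖ ^ 2 ≤ ‖T (T x)‖ * ‖x‖

/-- `|T|`, the unique positive square root of `T*T`. -/
def opAbs (T : H →L[ℂ] H) : H →L[ℂ] H :=
  CFC.sqrt (ContinuousLinearMap.adjoint T * T)

/-- `π₀₀(T)`: the set of isolated eigenvalues of `T` of finite multiplicity. -/
def pi00 (T : H →L[ℂ] H) : Set ℂ :=
  {z : ℂ | z ∈ spectrum ℂ T ∧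
    (∃ U : Set ℂ, IsOpen U ∧ U ∩ spectrum ℂ T = {z}) ∧
    LinearMap.ker ((T - z • (1 : H →L[ℂ] H) : H →L[ℂ] H) : H →ₗ[ℂ] H) ≠ ⊥ ∧
    FiniteDimensional ℂ (LinearMap.ker ((T - z • (1 : H →L[ℂ] H) : H →L[ℂ] H) : H →ₗ[ℂ] H))}

set_option synthInstance.maxHeartbeats 1000000
set_option maxHeartbeats 4000000

open ContinuousLinearMap
open scoped InnerProductSpace NNReal

lemma my_adjoint_mul_self_isPositive (T : H →L[ℂ] H) : (adjoint T * T).IsPositive := by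
  exact isPositive_adjoint_comp_self T

lemma my_opAbs_isPositive (T : H →L[ℂ] H) : (opAbs T).IsPositive :=
  (ContinuousLinearMap.nonneg_iff_isPositive _).1 (CFC.sqrt_nonneg _)

lemma my_opAbs_mul_self (T : H →L[ℂ] H) : opAbs T * opAbs T = adjoint T * T :=
  CFC.sqrt_mul_sqrt_self _
    ((ContinuousLinearMap.nonneg_iff_isPositive _).2 (my_adjoint_mul_self_isPositive T))

lemma my_opAbs_sq_apply (T : H →L[ℂ] H) (x : H) :
    opAbs T (opAbs T x) = adjoint T (T x) := by
  have := congrArg (fun S : H →L[ℂ] H => S x) (my_opAbs_mul_self T)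
  simpa [mul_apply] using this

lemma my_inner_opAbs_sq (T : H →L[ℂ] H) (x : H) :
    ⟪opAbs T (opAbs T x), x⟫_ℂ = (‖T x‖ : ℂ) ^ 2 := by
  rw [my_opAbs_sq_apply, adjoint_inner_left, inner_self_eq_norm_sq_to_K]
  norm_num

lemma my_re_inner_opAbs_sq (T : H →L[ℂ] H) (x : H) :
    (⟪opAbs T (opAbs T x), x⟫_ℂ).re = ‖T x‖ ^ 2 := by
  rw [my_inner_opAbs_sq]
  norm_cast

lemma my_norm_T_sq_of_eigen {T : H →L[ℂ] H} {c : ℝ} {x : H}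
    (h : opAbs T x = (c : ℂ) • x) : ‖T x‖ ^ 2 = c ^ 2 * ‖x‖ ^ 2 := by
  have h2 : opAbs T (opAbs T x) = ((c : ℂ) * (c : ℂ)) • x := by
    rw [h, map_smul, h, smul_smul]
  have := my_re_inner_opAbs_sq T x
  rw [h2] at this
  rw [← this, inner_smul_left, ← Complex.ofReal_mul, Complex.conj_ofReal,
    inner_self_eq_norm_sq_to_K]
  simp [pow_two, Complex.mul_re]
  try ring

lemma my_eigen_of_sq (T : H →L[ℂ] H) {c : ℝ} (hc : 0 < c) {x : H}
    (h : opAbs T (opAbs T x) = ((c : ℂ) * (c : ℂ)) • x) :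
    opAbs T x = (c : ℂ) • x := by
  set A := opAbs T with hA
  set y := A x - (c : ℂ) • x with hy
  have hAy : A y + (c : ℂ) • y = 0 := by
    have : A y = A (A x) - (c : ℂ) • A x := by rw [hy, map_sub, map_smul]
    rw [this, h, hy]
    module
  have hre : (⟪A y + (c : ℂ) • y, y⟫_ℂ).re = 0 := by rw [hAy]; simp
  have hpos : 0 ≤ (⟪A y, y⟫_ℂ).re := (my_opAbs_isPositive T).2 y
  have hsm : (⟪(c : ℂ) • y, y⟫_ℂ).re = c * ‖y‖ ^ 2 := by
    rw [inner_smul_left, Complex.conj_ofReal, inner_self_eq_norm_sq_to_K]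
    simp [pow_two, Complex.mul_re]
    try ring
  have hsum : (⟪A y + (c : ℂ) • y, y⟫_ℂ).re = (⟪A y, y⟫_ℂ).re + c * ‖y‖ ^ 2 := by
    rw [inner_add_left, Complex.add_re, hsm]
  have hnorm : ‖y‖ ^ 2 ≤ 0 := by nlinarith
  have : y = 0 := by
    have := sq_nonneg ‖y‖
    have hy0 : ‖y‖ ^ 2 = 0 := le_antisymm hnorm this
    simpa using pow_eq_zero_iff (n := 2) (by norm_num) |>.1 hy0
  rw [hy] at this
  linear_combination (norm := module) this

lemma my_sq_le {a b : ℝ} (hb : 0 ≤ b) (h : a ^ 2 ≤ b ^ 2) : a ≤ b := by nlinarith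

lemma my_hypo_norm {T : H →L[ℂ] H} (hhypo : Hyponormal T) (x : H) :
    ‖adjoint T x‖ ≤ ‖T x‖ := by
  have h := hhypo.2 x
  simp only [reApplyInnerSelf, sub_apply, mul_apply, inner_sub_left, map_sub,
    RCLike.re_to_complex] at h
  change 0 ≤ (⟪adjoint T (T x), x⟫_ℂ).re - (⟪T (adjoint T x), x⟫_ℂ).re at h
  have h2 : (⟪T (adjoint T x), x⟫_ℂ).re = ‖adjoint T x‖ ^ 2 := by
    rw [← adjoint_inner_right, inner_self_eq_norm_sq_to_K]
    norm_cast
  have h1 : (⟪adjoint T (T x), x⟫_ℂ).re = ‖T x‖ ^ 2 := by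
    rw [adjoint_inner_left, inner_self_eq_norm_sq_to_K]; norm_cast
  refine my_sq_le (norm_nonneg _) ?_
  rw [← h1, ← h2]
  linarith

/-- Degenerate Cauchy-Schwarz: a self-adjoint operator whose quadratic form is
nonnegative on an invariant subspace kills vectors where the form vanishes. -/
lemma my_cs_zero {Q : H →L[ℂ] H} (hsa : IsSelfAdjoint Q) {W : Submodule ℂ H}
    (hQW : ∀ w ∈ W, Q w ∈ W) (hpos : ∀ w ∈ W, 0 ≤ (⟪Q w, w⟫_ℂ).re)
    {x : H} (hx : x ∈ W) (hx0 : (⟪Q x, x⟫_ℂ).re = 0) : Q x = 0 := by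
  have hsymm := (ContinuousLinearMap.isSelfAdjoint_iff_isSymmetric (A := Q)).1 hsa
  have key : ∀ v ∈ W, ⟪Q x, v⟫_ℂ = 0 := by
    intro v hv
    by_contra hb
    set b := ⟪Q x, v⟫_ℂ with hbdef
    have hnb : 0 < Complex.normSq b := by
      simpa [Complex.normSq_pos] using hb
    set C := (⟪Q v, v⟫_ℂ).re with hC
    have hC0 : 0 ≤ C := hpos v hv
    have expand : ∀ t : ℝ, 0 ≤ 2 * (t * Complex.normSq b)
        + (t ^ 2 * Complex.normSq b) * C := by
      intro t
      set s := (t : ℂ) * (starRingEnd ℂ) b with hs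
      have hmem : x + s • v ∈ W := W.add_mem hx (W.smul_mem _ hv)
      have h0 := hpos _ hmem
      have hadj : adjoint Q = Q := by rw [← star_eq_adjoint]; exact hsa.star_eq
      have hvx : ⟪Q v, x⟫_ℂ = (starRingEnd ℂ) b := by
        rw [← hadj, adjoint_inner_left, ← inner_conj_symm, ← hbdef]
      have hinner : ⟪Q (x + s • v), x + s • v⟫_ℂ =
          ⟪Q x, x⟫_ℂ + (s * b + ((starRingEnd ℂ) s * (starRingEnd ℂ) b))
            + ((starRingEnd ℂ) s * s) * ⟪Q v, v⟫_ℂ := by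
        simp only [map_add, map_smul, inner_add_left, inner_add_right,
          inner_smul_left, inner_smul_right, hvx, ← hbdef]
        ring
      have hsb : s * b = ((t * Complex.normSq b : ℝ) : ℂ) := by
        rw [hs, mul_assoc, mul_comm ((starRingEnd ℂ) b) b, Complex.mul_conj]
        push_cast
        ring
      have hsbc : (starRingEnd ℂ) s * (starRingEnd ℂ) b
          = ((t * Complex.normSq b : ℝ) : ℂ) := by
        rw [← map_mul, hsb, Complex.conj_ofReal]
      have hss : (starRingEnd ℂ) s * s = ((t ^ 2 * Complex.normSq b : ℝ) : ℂ) := by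
        rw [hs, map_mul, Complex.conj_ofReal, Complex.conj_conj]
        have h4 : (t : ℂ) * b * ((t : ℂ) * (starRingEnd ℂ) b)
            = ((t : ℂ) * (t : ℂ)) * (b * (starRingEnd ℂ) b) := by ring
        rw [h4, Complex.mul_conj]
        push_cast
        ring
      rw [hinner, hsb, hsbc, hss] at h0
      simp only [Complex.add_re, Complex.ofReal_re, Complex.re_ofReal_mul, hx0] at h0
      rw [← hC] at h0
      linarith
    set u := 1 / (C + 1) with hu
    have hC1 : 0 < C + 1 := by linarith
    have hupos : 0 < u := by rw [hu]; positivity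
    have huC : u * C < 1 := by
      rw [hu, div_mul_eq_mul_div, one_mul]
      exact (div_lt_one hC1).2 (by linarith)
    have h1 := expand (-u)
    have hN : 0 < Complex.normSq b := hnb
    have hP : 0 < u * Complex.normSq b := mul_pos hupos hN
    nlinarith [mul_lt_mul_of_pos_left huC hP]
  have hQx : Q x ∈ W := hQW x hx
  have := key (Q x) hQx
  simpa [inner_self_eq_zero] using this


/-- A hyponormal `𝒜𝒩`-operator on an infinite-dimensional complex Hilbert space with
`σ_ess(|T|) = {λ}`, `λ > 0`, is normal iff it maps `H₁ = N(|T| - λI)` onto `H₁`. -/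
theorem hyponormal_AN_normal_iff_maps_onto' (hH : ¬ FiniteDimensional ℂ H)
    (T : H →L[ℂ] H) (hhypo : Hyponormal T) (hAN : IsANOperator T)
    (lam : ℝ) (hlam : 0 < lam)
    (hess : essSpectrum (opAbs T) = {(lam : ℂ)})
    (H₁ : Submodule ℂ H)
    (hH₁ : H₁ = LinearMap.ker ((opAbs T - (lam : ℂ) • (1 : H →L[ℂ] H) : H →L[ℂ] H) : H →ₗ[ℂ] H)) :
    (ContinuousLinearMap.adjoint T * T = T * ContinuousLinearMap.adjoint T) ↔
      T '' (H₁ : Set H) = (H₁ : Set H) := by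
  have hmem : ∀ x : H, x ∈ H₁ ↔ opAbs T x = (lam : ℂ) • x := by
    intro x
    rw [hH₁, LinearMap.mem_ker]
    constructor
    · intro h
      have h2 : opAbs T x - (lam : ℂ) • x = 0 := by
        simpa [sub_apply, smul_apply, one_apply] using h
      exact sub_eq_zero.1 h2
    · intro h
      show (opAbs T - (lam : ℂ) • (1 : H →L[ℂ] H)) x = 0
      simp [sub_apply, smul_apply, one_apply, h]
  have hH₁closed : IsClosed (H₁ : Set H) := by
    rw [hH₁]; exact isClosed_ker _
  have hTT : ∀ x ∈ H₁, adjoint T (T x) = ((lam : ℂ) * (lam : ℂ)) • x := by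
    intro x hx
    rw [← my_opAbs_sq_apply, (hmem x).1 hx, map_smul, (hmem x).1 hx, smul_smul]
  have hnormTx : ∀ x ∈ H₁, ‖T x‖ = lam * ‖x‖ := by
    intro x hx
    have h1 : ‖T x‖ ^ 2 = lam ^ 2 * ‖x‖ ^ 2 := my_norm_T_sq_of_eigen ((hmem x).1 hx)
    have h2 : ‖T x‖ ^ 2 = (lam * ‖x‖) ^ 2 := by rw [h1]; ring
    exact (sq_eq_sq₀ (norm_nonneg _) (by positivity)).1 h2
  constructor
  · -- normal implies T maps H₁ onto H₁
    intro hnormal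
    have hTinv : ∀ x ∈ H₁, T x ∈ H₁ := by
      intro x hx
      have e2 : (adjoint T * T) * T = T * (adjoint T * T) := by
        calc (adjoint T * T) * T = (T * adjoint T) * T := by rw [hnormal]
          _ = T * (adjoint T * T) := by rw [mul_assoc]
      have hc : adjoint T (T (T x)) = ((lam : ℂ) * (lam : ℂ)) • T x := by
        have e1 : adjoint T (T (T x)) = ((adjoint T * T) * T) x := rfl
        rw [e1, e2]
        show T ((adjoint T * T) x) = _
        rw [show (adjoint T * T) x = adjoint T (T x) from rfl, hTT x hx, map_smul]
      have h3 : opAbs T (opAbs T (T x)) = ((lam : ℂ) * (lam : ℂ)) • T x := by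
        rw [my_opAbs_sq_apply]; exact hc
      exact (hmem _).2 (my_eigen_of_sq T hlam h3)
    have hTadjinv : ∀ x ∈ H₁, adjoint T x ∈ H₁ := by
      intro x hx
      have e2 : (adjoint T * T) * adjoint T = adjoint T * (adjoint T * T) := by
        calc (adjoint T * T) * adjoint T = adjoint T * (T * adjoint T) := by rw [mul_assoc]
          _ = adjoint T * (adjoint T * T) := by rw [hnormal]
      have hc : adjoint T (T (adjoint T x)) = ((lam : ℂ) * (lam : ℂ)) • adjoint T x := by
        have e1 : adjoint T (T (adjoint T x)) = ((adjoint T * T) * adjoint T) x := rfl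
        rw [e1, e2]
        show adjoint T ((adjoint T * T) x) = _
        rw [show (adjoint T * T) x = adjoint T (T x) from rfl, hTT x hx, map_smul]
      have h3 : opAbs T (opAbs T (adjoint T x)) = ((lam : ℂ) * (lam : ℂ)) • adjoint T x := by
        rw [my_opAbs_sq_apply]; exact hc
      exact (hmem _).2 (my_eigen_of_sq T hlam h3)
    have hnn : ∀ v : H, ‖adjoint T v‖ = ‖T v‖ := by
      intro v
      have h1 : (⟪adjoint T (T v), v⟫_ℂ).re = ‖T v‖ ^ 2 := by
        rw [adjoint_inner_left, inner_self_eq_norm_sq_to_K]; norm_cast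
      have h2 : (⟪T (adjoint T v), v⟫_ℂ).re = ‖adjoint T v‖ ^ 2 := by
        rw [← adjoint_inner_right, inner_self_eq_norm_sq_to_K]; norm_cast
      have h3 : adjoint T (T v) = T (adjoint T v) := by
        have := congrArg (fun S : H →L[ℂ] H => S v) hnormal
        simpa [mul_apply] using this
      have h4 : ‖T v‖ ^ 2 = ‖adjoint T v‖ ^ 2 := by rw [← h1, ← h2, h3]
      exact (sq_eq_sq₀ (norm_nonneg _) (norm_nonneg _)).1 h4.symm
    set J : Submodule ℂ H := H₁.map (T : H →ₗ[ℂ] H) with hJ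
    have hJmem : ∀ y : H, y ∈ J ↔ ∃ x ∈ H₁, T x = y := by
      intro y
      rw [hJ, Submodule.mem_map]
      constructor
      · rintro ⟨x, hx, rfl⟩; exact ⟨x, hx, rfl⟩
      · rintro ⟨x, hx, rfl⟩; exact ⟨x, hx, rfl⟩
    have hJle : J ≤ H₁ := by
      intro y hy
      obtain ⟨x, hx, rfl⟩ := (hJmem y).1 hy
      exact hTinv x hx
    haveI : CompleteSpace H₁ := hH₁closed.completeSpace_coe
    have hJclosed : IsClosed (J : Set H) := by
      set f : H₁ →L[ℂ] H := T.comp (Submodule.subtypeL H₁) with hf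
      have hrange : (J : Set H) = Set.range f := by
        ext y
        constructor
        · intro hy
          obtain ⟨x, hx, rfl⟩ := (hJmem y).1 hy
          exact ⟨⟨x, hx⟩, rfl⟩
        · rintro ⟨⟨x, hx⟩, rfl⟩
          exact (hJmem _).2 ⟨x, hx, rfl⟩
      rw [hrange]
      set Kc : ℝ≥0 := ⟨lam⁻¹, inv_nonneg.2 hlam.le⟩ with hKc
      have hbound : ∀ x : H₁, ‖x‖ ≤ (Kc : ℝ) * ‖f x‖ := by
        intro x
        have hfx : ‖f x‖ = lam * ‖x‖ := hnormTx (x : H) x.2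
        rw [hfx]
        have : (Kc : ℝ) = lam⁻¹ := rfl
        rw [this, ← mul_assoc, inv_mul_cancel₀ hlam.ne', one_mul]
      have hal := ContinuousLinearMap.antilipschitz_of_bound f hbound
      exact hal.isClosed_range f.uniformContinuous
    have hJtop : J = H₁ := by
      by_contra hJeq
      have hJlt : J < H₁ := lt_of_le_of_ne hJle hJeq
      obtain ⟨z, hzH, hzJ⟩ := SetLike.exists_of_lt hJlt
      haveI : CompleteSpace J := hJclosed.completeSpace_coe
      set y := z - (Submodule.orthogonalProjection J z : H) with hy
      have hyJperp : y ∈ Jᗮ := Submodule.sub_starProjection_mem_orthogonal (K := J) z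
      have hyH : y ∈ H₁ := H₁.sub_mem hzH (hJle (Submodule.orthogonalProjection J z).2)
      have hyne : y ≠ 0 := by
        intro h0
        apply hzJ
        have hz2 : z = (Submodule.orthogonalProjection J z : H) := by
          have := sub_eq_zero.1 (hy ▸ h0 : z - (Submodule.orthogonalProjection J z : H) = 0)
          exact this
        rw [hz2]
        exact (Submodule.orthogonalProjection J z).2
      have hTadj_y : adjoint T y ∈ H₁ := hTadjinv y hyH
      have hzero : ⟪adjoint T y, adjoint T y⟫_ℂ = 0 := by
        rw [adjoint_inner_right]
        exact (Submodule.mem_orthogonal J y).1 hyJperp (T (adjoint T y))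
          ((hJmem _).2 ⟨adjoint T y, hTadj_y, rfl⟩)
      have hTy0 : adjoint T y = 0 := by rwa [inner_self_eq_zero] at hzero
      have h5 : lam * ‖y‖ = 0 := by
        rw [← hnormTx y hyH, ← hnn y, hTy0, norm_zero]
      have h6 : ‖y‖ = 0 := by
        rcases mul_eq_zero.1 h5 with h | h
        · exact absurd h hlam.ne'
        · exact h
      exact hyne (norm_eq_zero.1 h6)
    calc T '' (H₁ : Set H) = (J : Set H) := by
          ext u
          constructor
          · rintro ⟨x, hx, rfl⟩; exact (hJmem _).2 ⟨x, hx, rfl⟩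
          · intro hu
            obtain ⟨x, hx, rfl⟩ := (hJmem u).1 hu
            exact ⟨x, hx, rfl⟩
      _ = (H₁ : Set H) := by rw [hJtop]
  · -- T(H₁) = H₁ implies normal
    intro him
    have hTH₁ : ∀ x ∈ H₁, T x ∈ H₁ := by
      intro x hx
      have h : T x ∈ T '' (H₁ : Set H) := ⟨x, hx, rfl⟩
      rwa [him] at h
    have hsurj : ∀ y ∈ H₁, ∃ x ∈ H₁, T x = y := by
      intro y hy
      have h : y ∈ T '' (H₁ : Set H) := by rw [him]; exact hy
      obtain ⟨x, hx, rfl⟩ := h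
      exact ⟨x, hx, rfl⟩
    set S : Set (Submodule ℂ H) := {V | IsClosed (V : Set H) ∧ H₁ ≤ V ∧
      (∀ x ∈ V, T x ∈ V) ∧ (∀ x ∈ V, adjoint T x ∈ V) ∧
      (∀ x ∈ V, adjoint T (T x) = T (adjoint T x))} with hS
    have hH₁S : H₁ ∈ S := by
      refine ⟨hH₁closed, le_rfl, hTH₁, ?_, ?_⟩
      · intro x hx
        obtain ⟨z, hz, rfl⟩ := hsurj x hx
        rw [hTT z hz]
        exact H₁.smul_mem _ hz
      · intro x hx
        obtain ⟨z, hz, rfl⟩ := hsurj x hx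
        rw [hTT z hz, hTT (T z) (hTH₁ z hz), map_smul]
    have hchain : ∀ c ⊆ S, IsChain (· ≤ ·) c → ∀ y ∈ c, ∃ ub ∈ S, ∀ z ∈ c, z ≤ ub := by
      intro c hcS hc y hy
      set U0 := sSup c with hU0
      have hmemU0 : ∀ {x : H}, x ∈ U0 → ∃ Vc ∈ c, x ∈ Vc := by
        intro x hx
        exact (Submodule.mem_sSup_of_directed ⟨y, hy⟩ hc.directedOn).1 hx
      have hT0 : ∀ x ∈ U0, T x ∈ U0 := by
        intro x hx
        obtain ⟨Vc, hVc, hxV⟩ := hmemU0 hx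
        exact le_sSup hVc ((hcS hVc).2.2.1 x hxV)
      have hTa0 : ∀ x ∈ U0, adjoint T x ∈ U0 := by
        intro x hx
        obtain ⟨Vc, hVc, hxV⟩ := hmemU0 hx
        exact le_sSup hVc ((hcS hVc).2.2.2.1 x hxV)
      have hD0 : ∀ x ∈ U0, adjoint T (T x) = T (adjoint T x) := by
        intro x hx
        obtain ⟨Vc, hVc, hxV⟩ := hmemU0 hx
        exact (hcS hVc).2.2.2.2 x hxV
      refine ⟨U0.topologicalClosure, ⟨Submodule.isClosed_topologicalClosure _, ?_, ?_, ?_, ?_⟩, ?_⟩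
      · exact le_trans (le_trans (hcS hy).2.1 (le_sSup hy)) (Submodule.le_topologicalClosure _)
      · intro x hx
        have hx' : (x : H) ∈ closure (U0 : Set H) := by
          rwa [← Submodule.topologicalClosure_coe]
        have h1 : T x ∈ closure (T '' (U0 : Set H)) :=
          image_closure_subset_closure_image T.continuous ⟨x, hx', rfl⟩
        have h2 : closure (T '' (U0 : Set H)) ⊆ closure (U0 : Set H) := by
          apply closure_mono
          rintro _ ⟨a, ha, rfl⟩
          exact hT0 a ha
        have h3 := h2 h1
        rwa [← Submodule.topologicalClosure_coe] at h3
      · intro x hx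
        have hx' : (x : H) ∈ closure (U0 : Set H) := by
          rwa [← Submodule.topologicalClosure_coe]
        have h1 : adjoint T x ∈ closure (adjoint T '' (U0 : Set H)) :=
          image_closure_subset_closure_image (adjoint T).continuous ⟨x, hx', rfl⟩
        have h2 : closure (adjoint T '' (U0 : Set H)) ⊆ closure (U0 : Set H) := by
          apply closure_mono
          rintro _ ⟨a, ha, rfl⟩
          exact hTa0 a ha
        have h3 := h2 h1
        rwa [← Submodule.topologicalClosure_coe] at h3
      · intro x hx
        set g : H →L[ℂ] H := (adjoint T).comp T - T.comp (adjoint T) with hg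
        have hgc : IsClosed {v : H | adjoint T (T v) = T (adjoint T v)} := by
          have : {v : H | adjoint T (T v) = T (adjoint T v)} = g ⁻¹' {0} := by
            ext v
            simp only [Set.mem_setOf_eq, Set.mem_preimage, Set.mem_singleton_iff, hg,
              ContinuousLinearMap.sub_apply, ContinuousLinearMap.comp_apply]
            rw [sub_eq_zero]
          rw [this]
          exact isClosed_singleton.preimage g.continuous
        have hsub : (U0 : Set H) ⊆ {v : H | adjoint T (T v) = T (adjoint T v)} := hD0
        have hx' : (x : H) ∈ closure (U0 : Set H) := by
          rwa [← Submodule.topologicalClosure_coe]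
        exact (closure_minimal hsub hgc) hx'
      · intro z hz
        exact le_trans (le_sSup hz) (Submodule.le_topologicalClosure _)
    obtain ⟨V, hH₁leV', hVmax⟩ := zorn_le_nonempty₀ S hchain H₁ hH₁S
    have hVtop : V = ⊤ := by
      by_contra hVne
      obtain ⟨hVclosed, hH₁leV, hTV, hTaV, hDV⟩ := hVmax.1
      haveI : CompleteSpace V := hVclosed.completeSpace_coe
      set W := Vᗮ with hWdef
      have hWne : W ≠ ⊥ := by
        intro h0
        exact hVne (Submodule.orthogonal_eq_bot_iff.1 h0)
      have hWclosed : IsClosed (W : Set H) := Submodule.isClosed_orthogonal V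
      have hVW0 : ∀ x, x ∈ V → x ∈ W → x = 0 := by
        intro x hxV hxW
        have h := (Submodule.mem_orthogonal V x).1 hxW x hxV
        rwa [inner_self_eq_zero] at h
      have hTW : ∀ w ∈ W, T w ∈ W := by
        intro w hw
        rw [Submodule.mem_orthogonal]
        intro u hu
        rw [← adjoint_inner_left]
        exact (Submodule.mem_orthogonal V w).1 hw _ (hTaV u hu)
      have hTaW : ∀ w ∈ W, adjoint T w ∈ W := by
        intro w hw
        rw [Submodule.mem_orthogonal]
        intro u hu
        rw [adjoint_inner_right]
        exact (Submodule.mem_orthogonal V w).1 hw _ (hTV u hu)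
      obtain ⟨x, hxW, hx1, hxattain⟩ := hAN W hWclosed hWne
      set c := ‖T x‖ with hcdef
      have hub : ∀ w ∈ W, ‖T w‖ ≤ c * ‖w‖ := by
        intro w hw
        rcases eq_or_ne w 0 with rfl | hw0
        · simp
        · have hwn : ‖w‖ ≠ 0 := norm_ne_zero_iff.2 hw0
          have hwpos : 0 < ‖w‖ := norm_pos_iff.2 hw0
          set w' := ((‖w‖⁻¹ : ℝ) : ℂ) • w with hw'
          have hw'W : w' ∈ W := W.smul_mem _ hw
          have hw'1 : ‖w'‖ = 1 := by
            rw [hw', norm_smul, Complex.norm_real, norm_inv, Real.norm_eq_abs,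
              abs_of_nonneg (norm_nonneg w), inv_mul_cancel₀ hwn]
          have hbdd : BddAbove {r : ℝ | ∃ y ∈ W, ‖y‖ = 1 ∧ r = ‖T y‖} := by
            refine ⟨‖T‖, ?_⟩
            rintro r ⟨u, hu, hu1, rfl⟩
            calc ‖T u‖ ≤ ‖T‖ * ‖u‖ := T.le_opNorm u
              _ = ‖T‖ := by rw [hu1, mul_one]
          have h1 : ‖T w'‖ ≤ c := by
            rw [hxattain]
            exact le_csSup hbdd ⟨w', hw'W, hw'1, rfl⟩
          have h2 : ‖T w'‖ = ‖w‖⁻¹ * ‖T w‖ := by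
            rw [hw', map_smul, norm_smul, Complex.norm_real, norm_inv, Real.norm_eq_abs,
              abs_of_nonneg (norm_nonneg w)]
          rw [h2] at h1
          calc ‖T w‖ = ‖w‖ * (‖w‖⁻¹ * ‖T w‖) := by
                field_simp
            _ ≤ ‖w‖ * c := by
                exact mul_le_mul_of_nonneg_left h1 (norm_nonneg w)
            _ = c * ‖w‖ := mul_comm _ _
      have hc0 : 0 ≤ c := norm_nonneg _
      set Q : H →L[ℂ] H := ((c : ℂ) * (c : ℂ)) • (1 : H →L[ℂ] H) - opAbs T * opAbs T with hQ
      have hQapply : ∀ v, Q v = ((c : ℂ) * (c : ℂ)) • v - opAbs T (opAbs T v) := by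
        intro v
        rw [hQ]
        simp [sub_apply, smul_apply, one_apply, mul_apply]
      have hQsa : IsSelfAdjoint Q := by
        rw [hQ]
        refine IsSelfAdjoint.sub ?_ ?_
        · refine IsSelfAdjoint.smul ?_ (IsSelfAdjoint.one _)
          rw [← Complex.ofReal_mul]
          exact Complex.conj_ofReal _
        · rw [my_opAbs_mul_self]
          exact (my_adjoint_mul_self_isPositive T).isSelfAdjoint
      have hQW : ∀ w ∈ W, Q w ∈ W := by
        intro w hw
        rw [hQapply]
        refine W.sub_mem (W.smul_mem _ hw) ?_
        rw [my_opAbs_sq_apply]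
        exact hTaW _ (hTW w hw)
      have hreQ : ∀ v, (⟪Q v, v⟫_ℂ).re = c ^ 2 * ‖v‖ ^ 2 - ‖T v‖ ^ 2 := by
        intro v
        rw [hQapply, inner_sub_left, Complex.sub_re, my_re_inner_opAbs_sq,
          inner_smul_left, ← Complex.ofReal_mul, Complex.conj_ofReal,
          inner_self_eq_norm_sq_to_K]
        simp [pow_two, Complex.mul_re]
        try ring
      have hQpos : ∀ w ∈ W, 0 ≤ (⟪Q w, w⟫_ℂ).re := by
        intro w hw
        rw [hreQ]
        have h := hub w hw
        nlinarith [norm_nonneg (T w), norm_nonneg w]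
      have hQx0 : (⟪Q x, x⟫_ℂ).re = 0 := by
        rw [hreQ, hx1, ← hcdef]
        ring
      have hQxzero : Q x = 0 := my_cs_zero hQsa hQW hQpos hxW hQx0
      have hAx2 : opAbs T (opAbs T x) = ((c : ℂ) * (c : ℂ)) • x := by
        have h := hQxzero
        rw [hQapply] at h
        exact (sub_eq_zero.1 h).symm
      rcases eq_or_lt_of_le hc0 with hc0' | hcpos
      · -- c = 0 : T vanishes on W
        have hTW0 : ∀ w ∈ W, T w = 0 := by
          intro w hw
          have h := hub w hw
          rw [← hc0', zero_mul] at h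
          exact norm_le_zero_iff.1 h
        have hTaW0 : ∀ w ∈ W, adjoint T w = 0 := by
          intro w hw
          have h := my_hypo_norm hhypo w
          rw [hTW0 w hw, norm_zero] at h
          exact norm_le_zero_iff.1 h
        have htopS : (⊤ : Submodule ℂ H) ∈ S := by
          refine ⟨by simp, le_top, fun _ _ => Submodule.mem_top, fun _ _ => Submodule.mem_top, ?_⟩
          intro z _
          have hdecomp : z ∈ V ⊔ W := by
            rw [hWdef, Submodule.sup_orthogonal_of_hasOrthogonalProjection]
            exact Submodule.mem_top
          rw [Submodule.mem_sup] at hdecomp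
          obtain ⟨v, hv, w, hw, rfl⟩ := hdecomp
          rw [map_add, map_add, map_add, map_add, hTW0 w hw, hTaW0 w hw, map_zero, map_zero,
            add_zero, add_zero]
          exact hDV v hv
        have h := hVmax.2 htopS le_top
        exact hVne (top_le_iff.1 h)
      · -- c > 0
        have hAx : opAbs T x = (c : ℂ) • x := my_eigen_of_sq T hcpos hAx2
        have hxne : x ≠ 0 := by
          intro h
          rw [h, norm_zero] at hx1
          norm_num at hx1
        have hcne : c ≠ lam := by
          intro hceq
          apply hxne
          refine hVW0 x (hH₁leV ((hmem x).2 ?_)) hxW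
          rw [hAx, hceq]
        set E : Submodule ℂ H := (LinearMap.ker ((opAbs T - (c : ℂ) • (1 : H →L[ℂ] H) : H →L[ℂ] H) : H →ₗ[ℂ] H)) ⊓ W
          with hE
        have hmemE : ∀ v : H, v ∈ E ↔ (opAbs T v = (c : ℂ) • v ∧ v ∈ W) := by
          intro v
          rw [hE, Submodule.mem_inf, LinearMap.mem_ker]
          constructor
          · rintro ⟨h1, h2⟩
            refine ⟨?_, h2⟩
            have h3 : opAbs T v - (c : ℂ) • v = 0 := by
              simpa [sub_apply, smul_apply, one_apply] using h1
            exact sub_eq_zero.1 h3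
          · rintro ⟨h1, h2⟩
            exact ⟨by simp [sub_apply, smul_apply, one_apply, h1], h2⟩
        have hfinK : FiniteDimensional ℂ
            (LinearMap.ker ((opAbs T - (c : ℂ) • (1 : H →L[ℂ] H) : H →L[ℂ] H) : H →ₗ[ℂ] H)) := by
          have hnotin : (c : ℂ) ∉ essSpectrum (opAbs T) := by
            rw [hess]
            simp only [Set.mem_singleton_iff]
            intro h
            exact hcne (by exact_mod_cast h)
          have hfred : IsFredholmOp (opAbs T - (c : ℂ) • (1 : H →L[ℂ] H)) := by
            by_contra hnf
            exact hnotin hnf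
          exact hfred.2.1
        haveI := hfinK
        haveI hfinE : FiniteDimensional ℂ E := by
          rw [hE]
          exact Submodule.finiteDimensional_of_le inf_le_left
        have hEW : ∀ v ∈ E, v ∈ W := fun v hv => ((hmemE v).1 hv).2
        have hEeig : ∀ v ∈ E, opAbs T v = (c : ℂ) • v := fun v hv => ((hmemE v).1 hv).1
        have hTTE : ∀ v ∈ E, adjoint T (T v) = ((c : ℂ) * (c : ℂ)) • v := by
          intro v hv
          rw [← my_opAbs_sq_apply, hEeig v hv, map_smul, hEeig v hv, smul_smul]
        have hnormTE : ∀ v ∈ E, ‖T v‖ = c * ‖v‖ := by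
          intro v hv
          have h1 := my_norm_T_sq_of_eigen (hEeig v hv)
          have h2 : ‖T v‖ ^ 2 = (c * ‖v‖) ^ 2 := by rw [h1]; ring
          exact (sq_eq_sq₀ (norm_nonneg _) (by positivity)).1 h2
        have hTE : ∀ v ∈ E, T v ∈ E := by
          intro v hv
          have hTvW : T v ∈ W := hTW v (hEW v hv)
          have hq0 : (⟪Q (T v), T v⟫_ℂ).re = 0 := by
            refine le_antisymm ?_ (hQpos _ hTvW)
            rw [hreQ]
            have h1 : ‖T v‖ = c * ‖v‖ := hnormTE v hv
            have h3 : ‖adjoint T (T v)‖ = c * c * ‖v‖ := by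
              rw [hTTE v hv, norm_smul, norm_mul, Complex.norm_real, Real.norm_eq_abs,
                abs_of_nonneg hc0, mul_assoc]
            have h2 : c * c * ‖v‖ ≤ ‖T (T v)‖ := by
              rw [← h3]
              exact my_hypo_norm hhypo (T v)
            have h4 : (c * c * ‖v‖) ^ 2 ≤ ‖T (T v)‖ ^ 2 :=
              pow_le_pow_left₀ (by positivity) h2 2
            rw [h1]
            nlinarith [h4]
          have hQTv := my_cs_zero hQsa hQW hQpos hTvW hq0
          rw [hQapply] at hQTv
          have hsq2 : opAbs T (opAbs T (T v)) = ((c : ℂ) * (c : ℂ)) • (T v) :=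
            (sub_eq_zero.1 hQTv).symm
          exact (hmemE _).2 ⟨my_eigen_of_sq T hcpos hsq2, hTvW⟩
        have hTEinj : ∀ v ∈ E, T v = 0 → v = 0 := by
          intro v hv h0
          have h1 := hnormTE v hv
          rw [h0, norm_zero] at h1
          rcases mul_eq_zero.1 h1.symm with h | h
          · exact absurd h (ne_of_gt hcpos)
          · exact norm_eq_zero.1 h
        have hTEsurj : ∀ y ∈ E, ∃ v ∈ E, T v = y := by
          have hTE' : ∀ v ∈ E, (T : H →ₗ[ℂ] H) v ∈ E := hTE
          set φ : E →ₗ[ℂ] E := LinearMap.restrict (T : H →ₗ[ℂ] H) hTE' with hφ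
          have hinj : Function.Injective φ := by
            intro a b hab
            have h1 : T (a : H) = T (b : H) := congrArg Subtype.val hab
            have h2 : T ((a : H) - (b : H)) = 0 := by rw [map_sub, h1, sub_self]
            have h3 : (a : H) - (b : H) ∈ E := E.sub_mem a.2 b.2
            have h4 := hTEinj _ h3 h2
            exact Subtype.ext (sub_eq_zero.1 h4)
          have hsurjφ := LinearMap.injective_iff_surjective.1 hinj
          intro y hy
          obtain ⟨v, hv⟩ := hsurjφ ⟨y, hy⟩
          exact ⟨(v : H), v.2, congrArg Subtype.val hv⟩
        have hTaE : ∀ y ∈ E, adjoint T y ∈ E := by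
          intro y hy
          obtain ⟨v, hv, rfl⟩ := hTEsurj y hy
          rw [hTTE v hv]
          exact E.smul_mem _ hv
        have hDE : ∀ y ∈ E, adjoint T (T y) = T (adjoint T y) := by
          intro y hy
          obtain ⟨v, hv, rfl⟩ := hTEsurj y hy
          rw [hTTE _ (hTE v hv), hTTE v hv, map_smul]
        have hV'mem : ∀ z, z ∈ V ⊔ E → ∃ v ∈ V, ∃ e ∈ E, z = v + e := by
          intro z hz
          rw [Submodule.mem_sup] at hz
          obtain ⟨v, hv, e, he, hsum⟩ := hz
          exact ⟨v, hv, e, he, hsum.symm⟩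
        have hV'S : V ⊔ E ∈ S := by
          have hEclosed : IsClosed (E : Set H) := Submodule.closed_of_finiteDimensional E
          refine ⟨?_, le_trans hH₁leV le_sup_left, ?_, ?_, ?_⟩
          · set P := Submodule.orthogonalProjection V with hP
            set g : H →L[ℂ] H := ContinuousLinearMap.id ℂ H - (Submodule.subtypeL V).comp P
              with hg
            have hgz : ∀ z : H, g z = z - (P z : H) := by
              intro z
              rw [hg]
              simp [sub_apply, ContinuousLinearMap.comp_apply, Submodule.subtypeL_apply]
            have hset : ((V ⊔ E : Submodule ℂ H) : Set H) = g ⁻¹' (E : Set H) := by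
              ext z
              constructor
              · intro hz
                obtain ⟨v, hv, e, he, rfl⟩ := hV'mem z hz
                have hPe : P e = 0 :=
                  Submodule.orthogonalProjectionOnto_apply_of_mem_orthogonal (hEW e he)
                have hPv : (P v : H) = v :=
                  congrArg Subtype.val (Submodule.orthogonalProjection_mem_subspace_eq_self ⟨v, hv⟩)
                have hgve : g (v + e) = e := by
                  rw [hgz, map_add, hPe, add_zero]
                  push_cast [hPv]
                  abel
                show g (v + e) ∈ (E : Set H)
                rw [hgve]
                exact he
              · intro hz
                have hz' : g z ∈ E := hz
                have hdec : ((P z : H)) + g z = z := by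
                  rw [hgz]
                  abel
                show z ∈ (V ⊔ E : Submodule ℂ H)
                exact Submodule.mem_sup.2 ⟨(P z : H), (P z).2, g z, hz', hdec⟩
            rw [hset]
            exact hEclosed.preimage g.continuous
          · intro z hz
            obtain ⟨v, hv, e, he, rfl⟩ := hV'mem z hz
            rw [map_add]
            exact Submodule.add_mem_sup (hTV v hv) (hTE e he)
          · intro z hz
            obtain ⟨v, hv, e, he, rfl⟩ := hV'mem z hz
            rw [map_add]
            exact Submodule.add_mem_sup (hTaV v hv) (hTaE e he)
          · intro z hz
            obtain ⟨v, hv, e, he, rfl⟩ := hV'mem z hz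
            rw [map_add, map_add, map_add, map_add, hDV v hv, hDE e he]
        have hge : V ⊔ E ≤ V := hVmax.2 hV'S le_sup_left
        have hxE : x ∈ E := (hmemE x).2 ⟨hAx, hxW⟩
        have hxV : x ∈ V := hge (le_sup_right (a := V) hxE)
        exact hxne (hVW0 x hxV hxW)
    have hcomm := hVmax.1.2.2.2.2
    refine ContinuousLinearMap.ext fun x => ?_
    have h := hcomm x (by rw [hVtop]; exact Submodule.mem_top)
    simpa [mul_apply] using h
end
end

section
/- Let T be an absolutely norm attaining operator on a complex Hilbert space H such that both T and T* are paranormal. Then T is normal. -/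
noncomputable section

variable {H : Type*} [NormedAddCommGroup H] [InnerProductSpace ℂ H] [CompleteSpace H]

local notation "⟪" x ", " y "⟫" => @inner ℂ _ _ x y

lemma aux_bnd {V : Submodule ℂ H} {S S' : H →L[ℂ] H} {β : ℝ} (hβ0 : 0 ≤ β)
    (hadj : ∀ x y : H, ⟪S' x, y⟫ = ⟪x, S y⟫)
    (hS'V : ∀ z ∈ V, S' z ∈ V)
    (hb : ∀ z ∈ V, ‖S z‖ ≤ β * ‖z‖) :
    ∀ z ∈ V, ‖S' z‖ ≤ β * ‖z‖ := by
  intro z hz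
  rcases eq_or_lt_of_le (norm_nonneg (S' z)) with h0 | h0
  · rw [← h0]; positivity
  · have h1 : ‖S' z‖ * ‖S' z‖ ≤ (β * ‖z‖) * ‖S' z‖ := by
      calc ‖S' z‖ * ‖S' z‖ = RCLike.re ⟪S' z, S' z⟫ := by
            rw [inner_self_eq_norm_sq]; ring
        _ = RCLike.re ⟪z, S (S' z)⟫ := by rw [hadj]
        _ ≤ ‖z‖ * ‖S (S' z)‖ := re_inner_le_norm _ _
        _ ≤ ‖z‖ * (β * ‖S' z‖) :=
            mul_le_mul_of_nonneg_left (hb _ (hS'V z hz)) (norm_nonneg z)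
        _ = (β * ‖z‖) * ‖S' z‖ := by ring
    exact le_of_mul_le_mul_right h1 h0

lemma aux_eig {V : Submodule ℂ H} {S S' : H →L[ℂ] H} {β : ℝ}
    (hadj : ∀ x y : H, ⟪S' x, y⟫ = ⟪x, S y⟫)
    (hS' : ∀ z ∈ V, ‖S' z‖ ≤ β * ‖z‖)
    (hSV : ∀ z ∈ V, S z ∈ V)
    {z : H} (hz : z ∈ V) (h : ‖S z‖ = β * ‖z‖) :
    S' (S z) = (((β ^ 2 : ℝ) : ℂ)) • z := by
  set a := S' (S z) with ha
  have h1 : RCLike.re ⟪a, z⟫ = β ^ 2 * ‖z‖ ^ 2 := by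
    have e : ⟪a, z⟫ = ⟪S z, S z⟫ := hadj (S z) z
    rw [e, inner_self_eq_norm_sq, h]; ring
  have h2 : ‖a‖ ≤ β ^ 2 * ‖z‖ := by
    calc ‖a‖ ≤ β * ‖S z‖ := hS' _ (hSV z hz)
      _ = β ^ 2 * ‖z‖ := by rw [h]; ring
  have key : ‖a - ((β ^ 2 : ℝ) : ℂ) • z‖ ^ 2 ≤ 0 := by
    rw [norm_sub_sq (𝕜 := ℂ)]
    have e1 : RCLike.re ⟪a, ((β ^ 2 : ℝ) : ℂ) • z⟫ = β ^ 2 * RCLike.re ⟪a, z⟫ := by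
      rw [inner_smul_right]
      simp [Complex.mul_re, ← Complex.ofReal_pow]
    have e2 : ‖((β ^ 2 : ℝ) : ℂ) • z‖ = β ^ 2 * ‖z‖ := by
      rw [norm_smul]
      simp [abs_of_nonneg (sq_nonneg β)]
    rw [e1, e2, h1]
    nlinarith [norm_nonneg a, norm_nonneg z, sq_nonneg (β ^ 2 * ‖z‖)]
  have h0 : a - ((β ^ 2 : ℝ) : ℂ) • z = 0 := by
    have hn : ‖a - ((β ^ 2 : ℝ) : ℂ) • z‖ = 0 := by
      nlinarith [norm_nonneg (a - ((β ^ 2 : ℝ) : ℂ) • z)]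
    exact norm_eq_zero.mp hn
  exact sub_eq_zero.mp h0

set_option maxHeartbeats 1000000 in
/-- If `T` is an `𝒜𝒩`-operator and both `T` and `T*` are paranormal, then `T` is normal. -/
theorem paranormal_AN_normal (T : H →L[ℂ] H) (hAN : IsANOperator T)
    (hpara : Paranormal T) (hpara' : Paranormal (ContinuousLinearMap.adjoint T)) :
    ContinuousLinearMap.adjoint T * T = T * ContinuousLinearMap.adjoint T := by
  classical
  set T' : H →L[ℂ] H := ContinuousLinearMap.adjoint T with hT'def
  have hadj1 : ∀ x y : H, ⟪T' x, y⟫ = ⟪x, T y⟫ := fun x y =>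
    ContinuousLinearMap.adjoint_inner_left T y x
  have hadj2 : ∀ x y : H, ⟪T x, y⟫ = ⟪x, T' y⟫ := fun x y =>
    (ContinuousLinearMap.adjoint_inner_right T x y).symm
  set P : Submodule ℂ H → Prop := fun W =>
    (∀ z ∈ W, T z ∈ W) ∧ (∀ z ∈ W, T' z ∈ W) ∧ ∀ z ∈ W, T' (T z) = T (T' z) with hPdef
  -- Zorn
  obtain ⟨W, hWmax⟩ : ∃ W, Maximal (fun W => P W) W := by
    apply zorn_le₀
    intro c hc hchain
    rcases c.eq_empty_or_nonempty with rfl | hne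
    · exact ⟨⊥, ⟨by simp, by simp, by simp⟩, by simp⟩
    · refine ⟨sSup c, ⟨?_, ?_, ?_⟩, fun z hz => le_sSup hz⟩
      · intro z hz
        obtain ⟨y, hyc, hzy⟩ := (Submodule.mem_sSup_of_directed hne hchain.directedOn).mp hz
        exact (Submodule.mem_sSup_of_directed hne hchain.directedOn).mpr
          ⟨y, hyc, (hc hyc).1 z hzy⟩
      · intro z hz
        obtain ⟨y, hyc, hzy⟩ := (Submodule.mem_sSup_of_directed hne hchain.directedOn).mp hz
        exact (Submodule.mem_sSup_of_directed hne hchain.directedOn).mpr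
          ⟨y, hyc, (hc hyc).2.1 z hzy⟩
      · intro z hz
        obtain ⟨y, hyc, hzy⟩ := (Submodule.mem_sSup_of_directed hne hchain.directedOn).mp hz
        exact (hc hyc).2.2 z hzy
  have hWP : P W := hWmax.1
  -- W is closed
  have hinv_closure : ∀ (A : H →L[ℂ] H) (U : Submodule ℂ H), (∀ z ∈ U, A z ∈ U) →
      ∀ z ∈ U.topologicalClosure, A z ∈ U.topologicalClosure := by
    intro A U h z hz
    have hle : U.topologicalClosure ≤
        Submodule.comap (A : H →ₗ[ℂ] H) U.topologicalClosure := by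
      apply Submodule.topologicalClosure_minimal
      · intro w hw
        exact U.le_topologicalClosure (h w hw)
      · exact IsClosed.preimage A.continuous U.isClosed_topologicalClosure
    exact hle hz
  have hWcl : IsClosed (W : Set H) := by
    have hPc : P W.topologicalClosure := by
      refine ⟨hinv_closure T W hWP.1, hinv_closure T' W hWP.2.1, ?_⟩
      intro z hz
      have hker : W ≤ LinearMap.ker ((T' ∘L T - T ∘L T' : H →L[ℂ] H) : H →ₗ[ℂ] H) := by
        intro w hw
        rw [LinearMap.mem_ker]
        rw [ContinuousLinearMap.coe_coe, ContinuousLinearMap.sub_apply, ContinuousLinearMap.comp_apply,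
          ContinuousLinearMap.comp_apply, hWP.2.2 w hw, sub_self]
      have hle := Submodule.topologicalClosure_minimal W hker
        (ContinuousLinearMap.isClosed_ker _)
      have h0 := hle hz
      rw [LinearMap.mem_ker, ContinuousLinearMap.coe_coe, ContinuousLinearMap.sub_apply, ContinuousLinearMap.comp_apply,
        ContinuousLinearMap.comp_apply] at h0
      exact sub_eq_zero.mp h0
    have hle2 : W.topologicalClosure ≤ W := hWmax.2 hPc W.le_topologicalClosure
    have heq : W.topologicalClosure = W := le_antisymm hle2 W.le_topologicalClosure
    rw [← heq]
    exact W.isClosed_topologicalClosure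
  -- W = ⊤
  have hWtop : W = ⊤ := by
    by_contra hWt
    haveI : CompleteSpace W := hWcl.completeSpace_coe
    set V : Submodule ℂ H := Wᗮ with hVdef
    have hV : V ≠ ⊥ := fun h0 => hWt (Submodule.orthogonal_eq_bot_iff.mp h0)
    have hVcl : IsClosed (V : Set H) := Submodule.isClosed_orthogonal W
    have hTV : ∀ z ∈ V, T z ∈ V := by
      intro z hz
      rw [Submodule.mem_orthogonal]
      intro u hu
      rw [← hadj1 u z]
      exact (Submodule.mem_orthogonal _ _).mp hz _ (hWP.2.1 u hu)
    have hT'V : ∀ z ∈ V, T' z ∈ V := by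
      intro z hz
      rw [Submodule.mem_orthogonal]
      intro u hu
      rw [← hadj2 u z]
      exact (Submodule.mem_orthogonal _ _).mp hz _ (hWP.1 u hu)
    obtain ⟨x, hxV, hx1, hxβ⟩ := (hAN V hVcl hV : ∃ x ∈ V, ‖x‖ = 1 ∧ ‖T x‖ = sSup {r : ℝ | ∃ y ∈ V, ‖y‖ = 1 ∧ r = ‖T y‖})
    set β : ℝ := ‖T x‖ with hβdef
    have hβ0 : 0 ≤ β := norm_nonneg _
    -- the bound on V
    have hbu : ∀ y ∈ V, ‖y‖ = 1 → ‖T y‖ ≤ β := by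
      intro y hy hy1
      have hbdd : BddAbove {r : ℝ | ∃ y ∈ V, ‖y‖ = 1 ∧ r = ‖T y‖} := by
        refine ⟨‖T‖, ?_⟩
        rintro r ⟨y, hy, hy1, rfl⟩
        simpa [hy1] using T.le_opNorm y
      have := le_csSup hbdd (show ‖T y‖ ∈ _ from ⟨y, hy, hy1, rfl⟩)
      rw [← hxβ] at this
      exact this
    have hb : ∀ z ∈ V, ‖T z‖ ≤ β * ‖z‖ := by
      intro z hz
      rcases eq_or_ne z 0 with rfl | hz0
      · simp
      · have hz0' : ‖z‖ ≠ 0 := norm_ne_zero_iff.mpr hz0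
        set u : H := ((‖z‖⁻¹ : ℝ) : ℂ) • z with hudef
        have hu1 : ‖u‖ = 1 := by
          rw [hudef, norm_smul]
          simp [abs_of_nonneg (inv_nonneg.mpr (norm_nonneg z)), inv_mul_cancel₀ hz0']
        have hTu : ‖T u‖ ≤ β := hbu u (V.smul_mem _ hz) hu1
        have hzu : z = ((‖z‖ : ℝ) : ℂ) • u := by
          rw [hudef, smul_smul]
          norm_cast
          rw [mul_inv_cancel₀ hz0', one_smul]
        calc ‖T z‖ = ‖z‖ * ‖T u‖ := by
              conv_lhs => rw [hzu]
              rw [map_smul, norm_smul]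
              simp [abs_of_nonneg (norm_nonneg z)]
          _ ≤ ‖z‖ * β := mul_le_mul_of_nonneg_left hTu (norm_nonneg z)
          _ = β * ‖z‖ := mul_comm _ _
    have hb' : ∀ z ∈ V, ‖T' z‖ ≤ β * ‖z‖ := aux_bnd hβ0 hadj1 hT'V hb
    -- eigen lemmas
    have eigT : ∀ z ∈ V, ‖T z‖ = β * ‖z‖ → T' (T z) = ((β ^ 2 : ℝ) : ℂ) • z :=
      fun z hz h => aux_eig hadj1 hb' hTV hz h
    have eigT' : ∀ z ∈ V, ‖T' z‖ = β * ‖z‖ → T (T' z) = ((β ^ 2 : ℝ) : ℂ) • z :=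
      fun z hz h => aux_eig hadj2 hb hT'V hz h
    -- paranormal steps
    have hpstep : ∀ z ∈ V, ‖T z‖ = β * ‖z‖ → ‖T (T z)‖ = β * ‖T z‖ := by
      intro z hz h
      rcases eq_or_ne z 0 with rfl | hz0
      · simp
      · have hz0' : 0 < ‖z‖ := norm_pos_iff.mpr hz0
        have h1 : ‖T z‖ ^ 2 ≤ ‖T (T z)‖ * ‖z‖ := hpara z
        have h2 : ‖T (T z)‖ ≤ β * ‖T z‖ := hb _ (hTV z hz)
        have h3 : β * ‖T z‖ ≤ ‖T (T z)‖ := by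
          rw [h] at h1 ⊢
          nlinarith [h1, hz0']
        linarith
    have hpstep' : ∀ z ∈ V, ‖T' z‖ = β * ‖z‖ → ‖T' (T' z)‖ = β * ‖T' z‖ := by
      intro z hz h
      rcases eq_or_ne z 0 with rfl | hz0
      · simp
      · have hz0' : 0 < ‖z‖ := norm_pos_iff.mpr hz0
        have h1 : ‖T' z‖ ^ 2 ≤ ‖T' (T' z)‖ * ‖z‖ := hpara' z
        have h2 : ‖T' (T' z)‖ ≤ β * ‖T' z‖ := hb' _ (hT'V z hz)
        have h3 : β * ‖T' z‖ ≤ ‖T' (T' z)‖ := by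
          rw [h] at h1 ⊢
          nlinarith [h1, hz0']
        linarith
    -- recovering norms from the eigen equations
    have normT : ∀ z ∈ V, T' (T z) = ((β ^ 2 : ℝ) : ℂ) • z → ‖T z‖ = β * ‖z‖ := by
      intro z hz h
      have e : ⟪T z, T z⟫ = ⟪((β ^ 2 : ℝ) : ℂ) • z, z⟫ := by
        rw [← h]; exact (hadj1 (T z) z).symm
      have e2 : RCLike.re ⟪T z, T z⟫ = β ^ 2 * ‖z‖ ^ 2 := by
        rw [e, inner_smul_left]
        simp [Complex.mul_re, ← Complex.ofReal_pow, inner_self_eq_norm_sq (𝕜 := ℂ)]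
      rw [inner_self_eq_norm_sq] at e2
      nlinarith [norm_nonneg (T z), norm_nonneg z, mul_nonneg hβ0 (norm_nonneg z)]
    have normT' : ∀ z ∈ V, T (T' z) = ((β ^ 2 : ℝ) : ℂ) • z → ‖T' z‖ = β * ‖z‖ := by
      intro z hz h
      have e : ⟪T' z, T' z⟫ = ⟪((β ^ 2 : ℝ) : ℂ) • z, z⟫ := by
        rw [← h]; exact (hadj2 (T' z) z).symm
      have e2 : RCLike.re ⟪T' z, T' z⟫ = β ^ 2 * ‖z‖ ^ 2 := by
        rw [e, inner_smul_left]
        simp [Complex.mul_re, ← Complex.ofReal_pow, inner_self_eq_norm_sq (𝕜 := ℂ)]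
      rw [inner_self_eq_norm_sq] at e2
      nlinarith [norm_nonneg (T' z), norm_nonneg z, mul_nonneg hβ0 (norm_nonneg z)]
    -- the subspace N
    set N : Submodule ℂ H := V ⊓ LinearMap.ker ((T' ∘L T - ((β ^ 2 : ℝ) : ℂ) • (1 : H →L[ℂ] H) : H →L[ℂ] H) : H →ₗ[ℂ] H)
      ⊓ LinearMap.ker ((T ∘L T' - ((β ^ 2 : ℝ) : ℂ) • (1 : H →L[ℂ] H) : H →L[ℂ] H) : H →ₗ[ℂ] H) with hNdef
    have hNmem : ∀ z : H, z ∈ N ↔ z ∈ V ∧ T' (T z) = ((β ^ 2 : ℝ) : ℂ) • z ∧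
        T (T' z) = ((β ^ 2 : ℝ) : ℂ) • z := by
      intro z
      rw [hNdef]
      simp only [Submodule.mem_inf, LinearMap.mem_ker, ContinuousLinearMap.coe_coe, ContinuousLinearMap.sub_apply,
        ContinuousLinearMap.comp_apply, ContinuousLinearMap.smul_apply,
        ContinuousLinearMap.one_apply, sub_eq_zero, and_assoc]
    have hTN : ∀ z ∈ N, T z ∈ N := by
      intro z hz
      rw [hNmem] at hz
      obtain ⟨hzV, h2, h3⟩ := hz
      have hnz : ‖T z‖ = β * ‖z‖ := normT z hzV h2
      rw [hNmem]
      refine ⟨hTV z hzV, eigT (T z) (hTV z hzV) (hpstep z hzV hnz), ?_⟩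
      rw [h2, map_smul]
    have hT'N : ∀ z ∈ N, T' z ∈ N := by
      intro z hz
      rw [hNmem] at hz
      obtain ⟨hzV, h2, h3⟩ := hz
      have hnz : ‖T' z‖ = β * ‖z‖ := normT' z hzV h3
      rw [hNmem]
      refine ⟨hT'V z hzV, ?_, eigT' (T' z) (hT'V z hzV) (hpstep' z hzV hnz)⟩
      rw [h3, map_smul]
    -- N is nonzero
    have hNbot : N ≠ ⊥ := by
      rw [Submodule.ne_bot_iff]
      rcases eq_or_lt_of_le hβ0 with hβe | hβpos
      · refine ⟨x, ?_, ?_⟩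
        · rw [hNmem]
          have hTx : T x = 0 := by
            rw [← norm_eq_zero, ← hβdef, ← hβe]
          have hT'x : T' x = 0 := by
            rw [← norm_eq_zero]
            have := hb' x hxV
            have h0 : β * ‖x‖ = 0 := by rw [← hβe, zero_mul]
            linarith [norm_nonneg (T' x)]
          refine ⟨hxV, ?_, ?_⟩
          · rw [hTx, map_zero, ← hβe]
            norm_num
          · rw [hT'x, map_zero, ← hβe]
            norm_num
        · intro h0
          rw [h0, norm_zero] at hx1
          norm_num at hx1
      · -- β > 0 : use T x
        have hxn : ‖T x‖ = β * ‖x‖ := by rw [hx1, mul_one]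
        have huV : T x ∈ V := hTV x hxV
        have hu0 : T x ≠ 0 := by
          intro h0
          have : β = 0 := by rw [hβdef, h0, norm_zero]
          exact absurd this (ne_of_gt hβpos)
        have hTu : ‖T (T x)‖ = β * ‖T x‖ := hpstep x hxV hxn
        have hT'u : T' (T x) = ((β ^ 2 : ℝ) : ℂ) • x := eigT x hxV hxn
        have hT'un : ‖T' (T x)‖ = β * ‖T x‖ := by
          rw [hT'u, norm_smul, hx1]
          simp only [Complex.norm_real, Real.norm_eq_abs, abs_of_nonneg (sq_nonneg β), mul_one]
          rw [← hβdef]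
          ring
        refine ⟨T x, ?_, hu0⟩
        rw [hNmem]
        exact ⟨huV, eigT (T x) huV hTu, eigT' (T x) huV hT'un⟩
    -- contradiction with maximality
    obtain ⟨n₀, hn₀N, hn₀⟩ := (Submodule.ne_bot_iff N).mp hNbot
    have hPW' : P (W ⊔ N) := by
      refine ⟨?_, ?_, ?_⟩
      · intro z hz
        obtain ⟨w, hw, n, hn, rfl⟩ := Submodule.mem_sup.mp hz
        rw [map_add]
        exact Submodule.mem_sup.mpr ⟨T w, hWP.1 w hw, T n, hTN n hn, rfl⟩
      · intro z hz
        obtain ⟨w, hw, n, hn, rfl⟩ := Submodule.mem_sup.mp hz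
        rw [map_add]
        exact Submodule.mem_sup.mpr ⟨T' w, hWP.2.1 w hw, T' n, hT'N n hn, rfl⟩
      · intro z hz
        obtain ⟨w, hw, n, hn, rfl⟩ := Submodule.mem_sup.mp hz
        have hn' := (hNmem n).mp hn
        rw [map_add, map_add, map_add, map_add, hWP.2.2 w hw, hn'.2.1, hn'.2.2]
    have hle : W ⊔ N ≤ W := hWmax.2 hPW' le_sup_left
    have hn₀W : n₀ ∈ W := hle (Submodule.mem_sup.mpr ⟨0, W.zero_mem, n₀, hn₀N, zero_add n₀⟩)
    have hn₀V : n₀ ∈ V := ((hNmem n₀).mp hn₀N).1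
    have : ⟪n₀, n₀⟫ = 0 := (Submodule.mem_orthogonal _ _).mp hn₀V n₀ hn₀W
    exact hn₀ (inner_self_eq_zero.mp this)
  -- conclude
  ext z
  have hz : z ∈ W := by rw [hWtop]; trivial
  rw [ContinuousLinearMap.mul_apply, ContinuousLinearMap.mul_apply]
  exact hWP.2.2 z hz
end
end
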